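/- Let α, β > 0, ω > 0, and let n be a nonzero integer. Suppose u ∈ C([0,∞)) ∩ C²((0,∞)) satisfies the Gross–Pitaevskii vortex equation u''(r) + u'(r)/r − (n²/r² + 2ω)·u(r) − 2α·u(r)³·ln(u(r)²/β) = 0 on (0,∞) and u(0) = 0. Then lim_{r→0⁺} r·u'(r) = 0. -/

import Mathlib

open MeasureTheory Filter Set

lemma log_cube_bound (β : ℝ) (hβ : 0 < β) (x : ℝ) :
    |x ^ 3 * Real.log (x ^ 2 / β)| ≤ |x| ^ 5 / β + β * |x| := by
  rcases eq_or_ne x 0 with rfl | hx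
  · simp [hβ.le]
  · have hx2 : 0 < x ^ 2 := by positivity
    have hy : 0 < x ^ 2 / β := by positivity
    have h1 : Real.log (x ^ 2 / β) ≤ x ^ 2 / β := by
      have := Real.log_le_sub_one_of_pos hy; linarith
    have h2 : -Real.log (x ^ 2 / β) ≤ β / x ^ 2 := by
      have h3 := Real.log_le_sub_one_of_pos (x := (x ^ 2 / β)⁻¹) (by positivity)
      rw [Real.log_inv] at h3
      have : (x ^ 2 / β)⁻¹ = β / x ^ 2 := by field_simp
      rw [this] at h3; linarith [div_pos hβ hx2]
    have habs : |Real.log (x ^ 2 / β)| ≤ x ^ 2 / β + β / x ^ 2 := by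
      rw [abs_le]
      constructor
      · nlinarith [div_pos hβ hx2, div_pos hx2 hβ]
      · nlinarith [div_pos hβ hx2, div_pos hx2 hβ]
    have : |x ^ 3 * Real.log (x ^ 2 / β)| = |x| ^ 3 * |Real.log (x ^ 2 / β)| := by
      rw [abs_mul, abs_pow]
    rw [this]
    have hx3 : (0:ℝ) < |x| ^ 3 := by positivity
    calc |x| ^ 3 * |Real.log (x ^ 2 / β)| ≤ |x| ^ 3 * (x ^ 2 / β + β / x ^ 2) := by
          exact mul_le_mul_of_nonneg_left habs hx3.le
      _ = |x| ^ 5 / β + β * |x| := by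
          have hxx : x ^ 2 = |x| ^ 2 := (sq_abs x).symm
          rw [hxx]
          have ha : (0:ℝ) < |x| := abs_pos.mpr hx
          field_simp

set_option maxHeartbeats 2000000 in
theorem gp_boundary_flux_zero
    (α β : ℝ) (hα : 0 < α) (hβ : 0 < β) (ω : ℝ) (hω : 0 < ω)
    (n : ℤ) (hn : n ≠ 0)
    (u u' u'' : ℝ → ℝ)
    (hu : ContinuousOn u (Set.Ici (0 : ℝ)))
    (hu' : ∀ r ∈ Set.Ioi (0 : ℝ), HasDerivAt u (u' r) r)
    (hu'' : ∀ r ∈ Set.Ioi (0 : ℝ), HasDerivAt u' (u'' r) r)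
    (hu''c : ContinuousOn u'' (Set.Ioi (0 : ℝ)))
    (heq : ∀ r ∈ Set.Ioi (0 : ℝ),
      u'' r + u' r / r - ((n : ℝ) ^ 2 / r ^ 2 + 2 * ω) * u r
        - 2 * α * (u r) ^ 3 * Real.log ((u r) ^ 2 / β) = 0)
    (hbc0 : u 0 = 0) :
    Tendsto (fun r => r * u' r) (nhdsWithin 0 (Set.Ioi (0 : ℝ))) (nhds 0) := by
  -- k : natAbs n = k + 1
  obtain ⟨k, hk⟩ : ∃ k : ℕ, n.natAbs = k + 1 := by
    refine ⟨n.natAbs - 1, ?_⟩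
    have : n.natAbs ≠ 0 := Int.natAbs_ne_zero.mpr hn
    omega
  have hn2 : (n : ℝ) ^ 2 = ((k : ℝ) + 1) ^ 2 := by
    rcases Int.natAbs_eq n with he | he <;> rw [hk] at he <;> rw [he] <;> push_cast <;> ring
  -- u tends to 0 from the right
  have hu0 : Tendsto u (nhdsWithin 0 (Ioi (0:ℝ))) (nhds 0) := by
    have := (hu 0 (self_mem_Ici)).tendsto
    rw [hbc0] at this
    exact this.mono_left (nhdsWithin_mono 0 Ioi_subset_Ici_self)
  -- continuity of u, u' on Ioi 0
  have hucIoi : ContinuousOn u (Ioi (0:ℝ)) := hu.mono (Ioi_subset_Ici le_rfl)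
  have hu'c : ContinuousOn u' (Ioi (0:ℝ)) :=
    fun r hr => ((hu'' r hr).continuousAt).continuousWithinAt
  -- the nonlinearity
  set h : ℝ → ℝ := fun x => 2 * ω * x + 2 * α * x ^ 3 * Real.log (x ^ 2 / β) with hh
  -- W and its derivative
  set W : ℝ → ℝ := fun r => r ^ (k+2) * u' r - ((k:ℝ)+1) * r ^ (k+1) * u r with hWdef
  set Wd : ℝ → ℝ := fun r => ((k:ℝ)+2) * r ^ (k+1) * u' r + r ^ (k+2) * u'' r
      - ((k:ℝ)+1) ^ 2 * r ^ k * u r - ((k:ℝ)+1) * r ^ (k+1) * u' r with hWddef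
  have hW' : ∀ r ∈ Ioi (0:ℝ), HasDerivAt W (Wd r) r := by
    intro r hr
    have h1 : HasDerivAt (fun r : ℝ => r ^ (k+2) * u' r)
        (((k:ℝ)+2) * r ^ (k+1) * u' r + r ^ (k+2) * u'' r) r := by
      have := (hasDerivAt_pow (k+2) r).mul (hu'' r hr)
      refine this.congr_deriv ?_
      push_cast; ring
    have h2 : HasDerivAt (fun r : ℝ => ((k:ℝ)+1) * r ^ (k+1) * u r)
        (((k:ℝ)+1) ^ 2 * r ^ k * u r + ((k:ℝ)+1) * r ^ (k+1) * u' r) r := by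
      have := (((hasDerivAt_pow (k+1) r).const_mul ((k:ℝ)+1)).mul (hu' r hr))
      refine this.congr_deriv ?_
      push_cast; ring
    have := h1.sub h2
    refine this.congr_deriv ?_
    simp only [hWddef]; ring
  have hWdeq : ∀ r ∈ Ioi (0:ℝ), Wd r = r ^ (k+2) * h (u r) := by
    intro r hr
    have hr0 : (0:ℝ) < r := hr
    have hE := heq r hr
    rw [hn2] at hE
    have hE2 : r^2 * u'' r + r * u' r - (((k:ℝ)+1)^2 + 2*ω*r^2) * u r
        - 2*α*r^2*(u r)^3 * Real.log ((u r)^2/β) = 0 := by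
      have hr' : r ≠ 0 := ne_of_gt hr0
      calc r^2 * u'' r + r * u' r - (((k:ℝ)+1)^2 + 2*ω*r^2) * u r
            - 2*α*r^2*(u r)^3 * Real.log ((u r)^2/β)
          = r^2 * (u'' r + u' r / r - (((k:ℝ)+1) ^ 2 / r ^ 2 + 2 * ω) * u r
            - 2 * α * (u r) ^ 3 * Real.log ((u r) ^ 2 / β)) := by
            field_simp
        _ = 0 := by rw [hE, mul_zero]
    simp only [hWddef, hh]
    have hrk : r ^ (k+2) = r ^ k * r ^ 2 := by ring
    have hrk1 : r ^ (k+1) = r ^ k * r := by ring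
    calc ((k:ℝ)+2) * r ^ (k+1) * u' r + r ^ (k+2) * u'' r
        - ((k:ℝ)+1) ^ 2 * r ^ k * u r - ((k:ℝ)+1) * r ^ (k+1) * u' r
        = r ^ k * (r^2 * u'' r + r * u' r - (((k:ℝ)+1)^2 + 2*ω*r^2) * u r
            - 2*α*r^2*(u r)^3 * Real.log ((u r)^2/β))
          + r ^ (k+2) * (2 * ω * u r + 2 * α * (u r) ^ 3 * Real.log ((u r) ^ 2 / β)) := by
          ring
      _ = r ^ (k+2) * (2 * ω * u r + 2 * α * (u r) ^ 3 * Real.log ((u r) ^ 2 / β)) := by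
          rw [hE2]; ring
  -- bound on u on [0,1]
  obtain ⟨M, hM⟩ : ∃ M, ∀ x ∈ Icc (0:ℝ) 1, ‖u x‖ ≤ M :=
    isCompact_Icc.exists_bound_of_continuousOn (hu.mono (fun x hx => hx.1))
  have hM0 : 0 ≤ M := le_trans (norm_nonneg _) (hM 0 ⟨le_rfl, zero_le_one⟩)
  -- bound on h ∘ u on (0,1]
  set C : ℝ := 2*ω*M + 2*α*(M^5/β + β*M) with hCdef
  have hC0 : 0 ≤ C := by positivity
  have hCb : ∀ r ∈ Ioc (0:ℝ) 1, |h (u r)| ≤ C := by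
    intro r hr
    have hur : |u r| ≤ M := hM r ⟨hr.1.le, hr.2⟩
    have hl := log_cube_bound β hβ (u r)
    have habs2 : |(u r)^3 * Real.log ((u r)^2/β)| ≤ M^5/β + β*M := by
      refine hl.trans ?_
      have h5 : |u r|^5 ≤ M^5 := pow_le_pow_left₀ (abs_nonneg _) hur 5
      gcongr
    rw [hCdef]
    simp only [hh]
    calc |2*ω*u r + 2*α*(u r)^3*Real.log ((u r)^2/β)|
        ≤ |2*ω*u r| + |2*α*(u r)^3*Real.log ((u r)^2/β)| := abs_add_le _ _
      _ ≤ 2*ω*M + 2*α*(M^5/β + β*M) := by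
          have e1 : |2*ω*u r| = 2*ω*|u r| := by
            rw [abs_mul, abs_of_pos (by positivity : (0:ℝ) < 2*ω)]
          have e2 : |2*α*(u r)^3*Real.log ((u r)^2/β)|
              = 2*α*|(u r)^3*Real.log ((u r)^2/β)| := by
            rw [show (2*α*(u r)^3*Real.log ((u r)^2/β))
                  = 2*α*((u r)^3*Real.log ((u r)^2/β)) by ring,
                abs_mul, abs_of_pos (by positivity : (0:ℝ) < 2*α)]
          rw [e1, e2]
          gcongr
  -- bound on Wd
  have hWdb : ∀ r ∈ Ioc (0:ℝ) 1, |Wd r| ≤ C * r ^ (k+2) := by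
    intro r hr
    rw [hWdeq r hr.1, abs_mul, abs_pow, abs_of_pos hr.1, mul_comm]
    exact mul_le_mul_of_nonneg_right (hCb r hr) (pow_nonneg hr.1.le _)
  have hWdb1 : ∀ r ∈ Ioc (0:ℝ) 1, |Wd r| ≤ C := by
    intro r hr
    refine (hWdb r hr).trans ?_
    calc C * r ^ (k+2) ≤ C * 1 := by
          exact mul_le_mul_of_nonneg_left (pow_le_one₀ hr.1.le hr.2) hC0
      _ = C := mul_one C
  -- continuity of Wd on Ioi 0
  have hWdc : ContinuousOn Wd (Ioi (0:ℝ)) := by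
    rw [hWddef]
    apply ContinuousOn.sub
    apply ContinuousOn.sub
    apply ContinuousOn.add
    · exact (continuousOn_const.mul (continuousOn_pow _)).mul hu'c
    · exact (continuousOn_pow _).mul hu''c
    · exact (continuousOn_const.mul (continuousOn_pow _)).mul hucIoi
    · exact (continuousOn_const.mul (continuousOn_pow _)).mul hu'c
  -- integrability of Wd on Ioc 0 1
  have hWdint : IntegrableOn Wd (Ioc (0:ℝ) 1) := by
    refine Integrable.mono' ((integrableOn_const_iff (C := C)).mpr (Or.inr measure_Ioc_lt_top)) ?_ ?_
    · exact (hWdc.mono Ioc_subset_Ioi_self).aestronglyMeasurable measurableSet_Ioc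
    · exact (ae_restrict_iff' measurableSet_Ioc).2 (ae_of_all _ fun x hx => hWdb1 x hx)
  set c : ℝ := W 1 - ∫ s in Ioc (0:ℝ) 1, Wd s with hcdef
  -- FTC formula
  have hWa : ∀ a ∈ Ioc (0:ℝ) 1, W a - c = ∫ s in Ioc (0:ℝ) a, Wd s := by
    intro a ha
    have hint_a1 : IntegrableOn Wd (Ioc a 1) :=
      hWdint.mono_set (Ioc_subset_Ioc ha.1.le le_rfl)
    have hint_0a : IntegrableOn Wd (Ioc (0:ℝ) a) :=
      hWdint.mono_set (Ioc_subset_Ioc le_rfl ha.2)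
    have hftc : ∫ s in a..1, Wd s = W 1 - W a := by
      apply intervalIntegral.integral_eq_sub_of_hasDerivAt
      · intro x hx
        rw [uIcc_of_le ha.2] at hx
        exact hW' x (lt_of_lt_of_le ha.1 hx.1)
      · rw [intervalIntegrable_iff, uIoc_of_le ha.2]
        exact hint_a1
    rw [intervalIntegral.integral_of_le ha.2] at hftc
    have hsplit : ∫ s in Ioc (0:ℝ) 1, Wd s
        = (∫ s in Ioc (0:ℝ) a, Wd s) + ∫ s in Ioc a 1, Wd s := by
      rw [← setIntegral_union (Ioc_disjoint_Ioc_of_le le_rfl) measurableSet_Ioc hint_0a hint_a1,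
        Ioc_union_Ioc_eq_Ioc ha.1.le ha.2]
    rw [hcdef, hsplit]
    linarith [hftc]
  -- quantitative bound
  have hWbound : ∀ a ∈ Ioc (0:ℝ) 1, |W a - c| ≤ C * a ^ (k+3) := by
    intro a ha
    rw [hWa a ha]
    have hint_0a : IntegrableOn Wd (Ioc (0:ℝ) a) :=
      hWdint.mono_set (Ioc_subset_Ioc le_rfl ha.2)
    have hbd : IntegrableOn (fun s => C * s ^ (k+2)) (Ioc (0:ℝ) a) := by
      apply Continuous.integrableOn_Ioc
      exact continuous_const.mul (continuous_pow _)
    calc |∫ s in Ioc (0:ℝ) a, Wd s| ≤ ∫ s in Ioc (0:ℝ) a, |Wd s| :=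
          norm_integral_le_integral_norm Wd
      _ ≤ ∫ s in Ioc (0:ℝ) a, C * s ^ (k+2) := by
          apply setIntegral_mono_on hint_0a.norm hbd measurableSet_Ioc
          intro x hx
          exact hWdb x ⟨hx.1, hx.2.trans ha.2⟩
      _ = C * (a ^ (k+3) / ((k:ℝ)+3)) := by
          rw [← intervalIntegral.integral_of_le ha.1.le,
            intervalIntegral.integral_const_mul, integral_pow]
          push_cast
          ring_nf
      _ ≤ C * a ^ (k+3) := by
          apply mul_le_mul_of_nonneg_left _ hC0
          apply div_le_self (pow_nonneg ha.1.le _)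
          push_cast
          linarith [Nat.cast_nonneg (α := ℝ) k]
  -- derivative of F
  set Q : ℝ := c/(4*((k:ℝ)+1)) with hQdef
  set F : ℝ → ℝ := fun r => u r / r^(k+1) + Q * (r^(2*k+2))⁻¹ with hFdef
  have hF' : ∀ r ∈ Ioi (0:ℝ), HasDerivAt F ((W r - c/2)/r^(2*k+3)) r := by
    intro r hr
    have hr0 : (0:ℝ) < r := hr
    have hrne : r ≠ 0 := hr0.ne'
    have hq : HasDerivAt (fun r : ℝ => u r / r^(k+1))
        ((u' r * r^(k+1) - u r * (((k:ℝ)+1) * r^k)) / (r^(k+1))^2) r := by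
      have := (hu' r hr).div (hasDerivAt_pow (k+1) r) (pow_ne_zero _ hrne)
      refine this.congr_deriv ?_
      push_cast
      ring
    have hq2 : HasDerivAt (fun r : ℝ => Q * (r^(2*k+2))⁻¹)
        (Q * (-(((2*k+2 : ℕ) : ℝ)  * r^(2*k+1)) / (r^(2*k+2))^2)) r := by
      have := ((hasDerivAt_pow (2*k+2) r).inv (pow_ne_zero _ hrne)).const_mul Q
      refine this.congr_deriv ?_
      rfl
    have hcomb := hq.add hq2
    refine hcomb.congr_deriv ?_
    have hkne : ((k:ℝ)+1) ≠ 0 := by positivity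
    rw [hWdef, hQdef]
    push_cast
    field_simp
    ring
  -- c = 0
  have hc0 : c = 0 := by
    by_contra hc
    have hcabs : 0 < |c| := abs_pos.mpr hc
    set δ₁ : ℝ := min 1 (|c|/(2*(C+1))) with hδdef
    have hδ₁ : 0 < δ₁ := lt_min one_pos (by positivity)
    have hδ₁le : δ₁ ≤ 1 := min_le_left _ _
    have hWnear : ∀ a ∈ Ioc (0:ℝ) δ₁, |W a - c| ≤ |c|/2 := by
      intro a ha
      have ha1 : a ∈ Ioc (0:ℝ) 1 := ⟨ha.1, ha.2.trans hδ₁le⟩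
      refine (hWbound a ha1).trans ?_
      have h1 : a ^ (k+3) ≤ a := by
        calc a ^ (k+3) ≤ a ^ 1 := pow_le_pow_of_le_one ha1.1.le ha1.2 (by omega)
          _ = a := pow_one a
      have h2 : a ≤ |c|/(2*(C+1)) := ha.2.trans (min_le_right _ _)
      calc C * a ^ (k+3) ≤ C * (|c|/(2*(C+1))) := by
            apply mul_le_mul_of_nonneg_left (h1.trans h2) hC0
        _ ≤ |c|/2 := by
            rw [mul_div_assoc', div_le_div_iff₀ (by positivity) (by norm_num : (0:ℝ) < 2)]
            nlinarith [hcabs]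
    have hQabs : Q ≠ 0 := by
      rw [hQdef]
      exact div_ne_zero hc (by positivity)
    rcases lt_or_gt_of_ne hc with hneg | hpos
    · -- c < 0 : W a ≤ c/2 on (0,δ₁], F antitone, u a → +∞
      have hW2 : ∀ a ∈ Ioc (0:ℝ) δ₁, W a ≤ c/2 := by
        intro a ha
        have := hWnear a ha
        rw [abs_of_neg hneg] at this
        have := (abs_le.mp this).2
        linarith
      have hFle : ∀ a ∈ Ioo (0:ℝ) δ₁, F δ₁ ≤ F a := by
        intro a ha
        have hanti : AntitoneOn F (Icc a δ₁) := by
          apply antitoneOn_of_deriv_nonpos (convex_Icc a δ₁)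
          · intro x hx
            exact (hF' x (lt_of_lt_of_le ha.1 hx.1)).continuousAt.continuousWithinAt
          · rw [interior_Icc]
            intro x hx
            exact (hF' x (ha.1.trans hx.1)).differentiableAt.differentiableWithinAt
          · rw [interior_Icc]
            intro x hx
            have hx0 : (0:ℝ) < x := ha.1.trans hx.1
            rw [(hF' x hx0).deriv]
            apply div_nonpos_of_nonpos_of_nonneg
            · have := hW2 x ⟨hx0, hx.2.le⟩; linarith
            · exact pow_nonneg hx0.le _
        exact hanti ⟨le_rfl, ha.2.le⟩ ⟨ha.2.le, le_rfl⟩ ha.2.le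
      have hua : ∀ a ∈ Ioo (0:ℝ) δ₁, F δ₁ * a^(k+1) - Q * (a^(k+1))⁻¹ ≤ u a := by
        intro a ha
        have hapos := ha.1
        have hne : a^(k+1) ≠ 0 := pow_ne_zero _ hapos.ne'
        have hFa : F a = u a / a^(k+1) + Q * (a^(2*k+2))⁻¹ := by rw [hFdef]
        have hstep := hFle a ha
        rw [hFa] at hstep
        have h2 := mul_le_mul_of_nonneg_right hstep (pow_pos hapos (k+1)).le
        have e : (a^(2*k+2))⁻¹ * a^(k+1) = (a^(k+1))⁻¹ := by
          rw [show 2*k+2 = (k+1)+(k+1) from by ring, pow_add]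
          field_simp
        have h3 : (u a / a^(k+1) + Q * (a^(2*k+2))⁻¹) * a^(k+1)
            = u a + Q * (a^(k+1))⁻¹ := by
          rw [add_mul, div_mul_cancel₀ _ hne, mul_assoc, e]
        rw [h3] at h2
        linarith
      have hQpos : 0 < -Q := by
        have : -Q = (-c)/(4*((k:ℝ)+1)) := by rw [hQdef]; ring
        rw [this]
        apply div_pos (by linarith) (by positivity)
      have hpow : Tendsto (fun a : ℝ => a^(k+1)) (nhdsWithin 0 (Ioi (0:ℝ)))
          (nhdsWithin 0 (Ioi (0:ℝ))) := by
        rw [tendsto_nhdsWithin_iff]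
        constructor
        · have := (continuous_pow (k+1)).tendsto (0:ℝ)
          simpa using this.mono_left nhdsWithin_le_nhds
        · exact eventually_nhdsWithin_of_forall (fun x hx => mem_Ioi.mpr (pow_pos hx _))
      have hinv : Tendsto (fun a : ℝ => (a^(k+1))⁻¹) (nhdsWithin 0 (Ioi (0:ℝ))) atTop :=
        tendsto_inv_nhdsGT_zero.comp hpow
      have hlin : Tendsto (fun a : ℝ => F δ₁ * a^(k+1)) (nhdsWithin 0 (Ioi (0:ℝ)))
          (nhds 0) := by
        have := ((continuous_pow (k+1)).tendsto (0:ℝ)).const_mul (F δ₁)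
        simpa using this.mono_left nhdsWithin_le_nhds
      have hrhs : Tendsto (fun a : ℝ => F δ₁ * a^(k+1) - Q * (a^(k+1))⁻¹)
          (nhdsWithin 0 (Ioi (0:ℝ))) atTop := by
        have h1 : Tendsto (fun a : ℝ => -Q * (a^(k+1))⁻¹) (nhdsWithin 0 (Ioi (0:ℝ)))
            atTop := hinv.const_mul_atTop hQpos
        have := hlin.add_atTop h1
        simpa [sub_eq_add_neg, neg_mul] using this
      have hev1 := hrhs.eventually_ge_atTop 1
      have hev2 : ∀ᶠ a in nhdsWithin 0 (Ioi (0:ℝ)), u a < 1 :=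
        hu0.eventually (eventually_lt_nhds one_pos)
      have hev3 : ∀ᶠ a in nhdsWithin 0 (Ioi (0:ℝ)), a ∈ Ioo (0:ℝ) δ₁ :=
        eventually_of_mem (Ioo_mem_nhdsGT_of_mem ⟨le_rfl, hδ₁⟩) (fun x hx => hx)
      obtain ⟨a, h1, h2, h3⟩ := (hev1.and (hev2.and hev3)).exists
      have := hua a h3
      linarith
    · -- c > 0 : W a ≥ c/2 on (0,δ₁], F monotone, u a → -∞
      have hW2 : ∀ a ∈ Ioc (0:ℝ) δ₁, c/2 ≤ W a := by
        intro a ha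
        have := hWnear a ha
        rw [abs_of_pos hpos] at this
        have := (abs_le.mp this).1
        linarith
      have hFle : ∀ a ∈ Ioo (0:ℝ) δ₁, F a ≤ F δ₁ := by
        intro a ha
        have hmono : MonotoneOn F (Icc a δ₁) := by
          apply monotoneOn_of_deriv_nonneg (convex_Icc a δ₁)
          · intro x hx
            exact (hF' x (lt_of_lt_of_le ha.1 hx.1)).continuousAt.continuousWithinAt
          · rw [interior_Icc]
            intro x hx
            exact (hF' x (ha.1.trans hx.1)).differentiableAt.differentiableWithinAt
          · rw [interior_Icc]
            intro x hx
            have hx0 : (0:ℝ) < x := ha.1.trans hx.1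
            rw [(hF' x hx0).deriv]
            apply div_nonneg _ (pow_nonneg hx0.le _)
            have := hW2 x ⟨hx0, hx.2.le⟩; linarith
        exact hmono ⟨le_rfl, ha.2.le⟩ ⟨ha.2.le, le_rfl⟩ ha.2.le
      have hua : ∀ a ∈ Ioo (0:ℝ) δ₁, u a ≤ F δ₁ * a^(k+1) - Q * (a^(k+1))⁻¹ := by
        intro a ha
        have hapos := ha.1
        have hne : a^(k+1) ≠ 0 := pow_ne_zero _ hapos.ne'
        have hFa : F a = u a / a^(k+1) + Q * (a^(2*k+2))⁻¹ := by rw [hFdef]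
        have hstep := hFle a ha
        rw [hFa] at hstep
        have h2 := mul_le_mul_of_nonneg_right hstep (pow_pos hapos (k+1)).le
        have e : (a^(2*k+2))⁻¹ * a^(k+1) = (a^(k+1))⁻¹ := by
          rw [show 2*k+2 = (k+1)+(k+1) from by ring, pow_add]
          field_simp
        have h3 : (u a / a^(k+1) + Q * (a^(2*k+2))⁻¹) * a^(k+1)
            = u a + Q * (a^(k+1))⁻¹ := by
          rw [add_mul, div_mul_cancel₀ _ hne, mul_assoc, e]
        rw [h3] at h2
        linarith
      have hQpos : 0 < Q := by
        rw [hQdef]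
        apply div_pos hpos (by positivity)
      have hpow : Tendsto (fun a : ℝ => a^(k+1)) (nhdsWithin 0 (Ioi (0:ℝ)))
          (nhdsWithin 0 (Ioi (0:ℝ))) := by
        rw [tendsto_nhdsWithin_iff]
        constructor
        · have := (continuous_pow (k+1)).tendsto (0:ℝ)
          simpa using this.mono_left nhdsWithin_le_nhds
        · exact eventually_nhdsWithin_of_forall (fun x hx => mem_Ioi.mpr (pow_pos hx _))
      have hinv : Tendsto (fun a : ℝ => (a^(k+1))⁻¹) (nhdsWithin 0 (Ioi (0:ℝ))) atTop :=
        tendsto_inv_nhdsGT_zero.comp hpow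
      have hlin : Tendsto (fun a : ℝ => F δ₁ * a^(k+1)) (nhdsWithin 0 (Ioi (0:ℝ)))
          (nhds 0) := by
        have := ((continuous_pow (k+1)).tendsto (0:ℝ)).const_mul (F δ₁)
        simpa using this.mono_left nhdsWithin_le_nhds
      have hrhs : Tendsto (fun a : ℝ => F δ₁ * a^(k+1) - Q * (a^(k+1))⁻¹)
          (nhdsWithin 0 (Ioi (0:ℝ))) atBot := by
        have h1 : Tendsto (fun a : ℝ => Q * (a^(k+1))⁻¹) (nhdsWithin 0 (Ioi (0:ℝ)))
            atTop := hinv.const_mul_atTop hQpos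
        have := hlin.add_atBot (tendsto_neg_atTop_atBot.comp h1)
        simpa [sub_eq_add_neg, Function.comp] using this
      have hev1 := hrhs.eventually_le_atBot (-1)
      have hev2 : ∀ᶠ a in nhdsWithin 0 (Ioi (0:ℝ)), -1 < u a :=
        hu0.eventually (eventually_gt_nhds (by norm_num))
      have hev3 : ∀ᶠ a in nhdsWithin 0 (Ioi (0:ℝ)), a ∈ Ioo (0:ℝ) δ₁ :=
        eventually_of_mem (Ioo_mem_nhdsGT_of_mem ⟨le_rfl, hδ₁⟩) (fun x hx => hx)
      obtain ⟨a, h1, h2, h3⟩ := (hev1.and (hev2.and hev3)).exists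
      have := hua a h3
      linarith
  -- conclusion
  have hfin : ∀ r ∈ Ioo (0:ℝ) 1, r * u' r = W r / r^(k+1) + ((k:ℝ)+1) * u r := by
    intro r hr
    have hrne : r ≠ 0 := hr.1.ne'
    rw [hWdef]
    field_simp
    ring
  have hWsmall : ∀ᶠ r in nhdsWithin 0 (Ioi (0:ℝ)), ‖W r / r^(k+1)‖ ≤ C * r^2 := by
    filter_upwards [Ioo_mem_nhdsGT_of_mem (Set.mem_Ico.mpr ⟨le_rfl, one_pos⟩)] with r hr
    have h1 : |W r - c| ≤ C * r ^ (k+3) := hWbound r ⟨hr.1, hr.2.le⟩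
    rw [hc0, sub_zero] at h1
    have hrpos : (0:ℝ) < r := hr.1
    rw [Real.norm_eq_abs, abs_div, abs_pow, abs_of_pos hrpos, div_le_iff₀ (by positivity)]
    calc |W r| ≤ C * r ^ (k+3) := h1
      _ = C * r^2 * r^(k+1) := by ring
  have hterm1 : Tendsto (fun r => W r / r^(k+1)) (nhdsWithin 0 (Ioi (0:ℝ))) (nhds 0) := by
    apply squeeze_zero_norm' hWsmall
    have : Tendsto (fun r : ℝ => C * r^2) (nhds 0) (nhds 0) := by
      have := (continuous_pow 2).tendsto (0:ℝ)
      simpa using this.const_mul C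
    exact this.mono_left nhdsWithin_le_nhds
  have hterm2 : Tendsto (fun r => ((k:ℝ)+1) * u r) (nhdsWithin 0 (Ioi (0:ℝ))) (nhds 0) := by
    simpa using hu0.const_mul ((k:ℝ)+1)
  have hsum := hterm1.add hterm2
  rw [add_zero] at hsum
  apply hsum.congr'
  filter_upwards [Ioo_mem_nhdsGT_of_mem (Set.mem_Ico.mpr ⟨le_rfl, one_pos⟩)] with r hr
  exact (hfin r hr).symm
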